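/- (Failure of the classic Perceptron under strategic manipulation.) There exist d = 2, α = 1/2, a label sequence s : ℕ → ℝ with s t ∈ {1, −1}, true points z : ℕ → E (E = EuclideanSpace ℝ (Fin 2)) given by z 0 = (−1, 0) with s 0 = −1 and, for all k ≥ 0, z (2k+1) = (0, −1) with label 1 and z (2k+2) = (−1/2, −1) with label −1, and a sequence x : ℕ → E such that: (i) the z t are linearly separable with margin, i.e. there is w° ∈ E with s t · ⟪z t, w°⟫ ≥ 1 for all t; (ii) defining the classic Perceptron run by w 0 = 0, pos t ↔ ⟪x t, w t⟫ ≥ 0, mistake t ↔ ((pos t ∧ s t = −1) ∨ (¬ pos t ∧ s t = 1)), and w (t+1) = w t + s t • (x t) if mistake t else w (t+1) = w t, each x t is a best response of the agent with true point z t and budget α to the classifier w t with threshold 0, i.e. x t maximizes y ↦ (1 if ⟪y, w t⟫ ≥ 0 else 0) − ‖y − z t‖/α over E; (iii) the set {t | mistake t} is infinite; and (iv) there exists w• ∈ E (namely w• = (1, 1/2)) that is a perfect classifier under manipulation: for every t, every best response x of the agent with true point z t and budget α to the classifier w• with threshold 0 satisfies ⟪x, w•⟫ ≥ 0 if and only if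 s t = 1. -/

import Mathlib

open RealInnerProductSpace

section PerceptronAux

local notation "E2" => EuclideanSpace ℝ (Fin 2)

private def e2 (a b : ℝ) : E2 := WithLp.toLp 2 ![a, b]

private lemma inner_two' (u v : E2) : ⟪u, v⟫ = u 0 * v 0 + u 1 * v 1 := by
  simp [PiLp.inner_apply, Fin.sum_univ_two]; ring

private lemma norm_two' (u : E2) : ‖u‖ = Real.sqrt (u 0 ^ 2 + u 1 ^ 2) := by
  simp [EuclideanSpace.norm_eq, Fin.sum_univ_two, Real.norm_eq_abs, sq_abs]

private lemma e2_zero (a b : ℝ) : e2 a b 0 = a := rfl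
private lemma e2_one (a b : ℝ) : e2 a b 1 = b := rfl

private lemma inner_mm (a b c d : ℝ) : ⟪e2 a b, e2 c d⟫ = a*c + b*d := by
  rw [inner_two', e2_zero, e2_one, e2_zero, e2_one]

private lemma inner_m0 (a b : ℝ) : ⟪e2 a b, (0 : E2)⟫ = 0 := by
  rw [inner_two']; norm_num

private lemma norm_mm (a b : ℝ) : ‖e2 a b‖ = Real.sqrt (a^2 + b^2) := by
  rw [norm_two', e2_zero, e2_one]

private lemma sub_mm (a b c d : ℝ) : e2 a b - e2 c d = e2 (a-c) (b-d) := by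
  ext i; fin_cases i <;> simp [e2]

private lemma add_smul_mm (a b c d s : ℝ) : e2 a b + s • e2 c d = e2 (a + s*c) (b + s*d) := by
  ext i; fin_cases i <;> simp [e2]

private lemma zero_add_smul_mm (c d s : ℝ) : (0 : E2) + s • e2 c d = e2 (s*c) (s*d) := by
  ext i; fin_cases i <;> simp [e2]

private lemma cs' (y zz ww : E2) (c : ℝ) (hz : ⟪zz, ww⟫ = -c) (hy : 0 ≤ ⟪y, ww⟫) :
    c ≤ ‖y - zz‖ * ‖ww‖ := by
  have h := real_inner_le_norm (y - zz) ww
  rw [inner_sub_left, hz] at h; linarith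

noncomputable section
open Classical

private def sA : ℕ → ℝ := fun t => if Even t then -1 else 1
private def zA : ℕ → E2 := fun t =>
  if t = 0 then e2 (-1) 0 else if Even t then e2 (-1/2) (-1) else e2 0 (-1)
private def xA : ℕ → E2 := fun t => if t = 0 then e2 (-1) 0 else e2 0 (-1)

private def wA : ℕ → E2
  | 0 => 0
  | (t+1) => if ((⟪xA t, wA t⟫ ≥ 0 ∧ sA t = -1) ∨ (¬(⟪xA t, wA t⟫ ≥ 0) ∧ sA t = 1))
      then wA t + sA t • xA t else wA t

private lemma wA_eq : ∀ t, wA t = if t = 0 then 0 else if t = 1 ∨ Even t then e2 1 0 else e2 1 1 := by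
  intro t
  induction t with
  | zero => simp [wA]
  | succ n ih =>
    match n, ih with
    | 0, _ =>
      show wA 1 = e2 1 0
      rw [wA]
      rw [if_pos]
      · show (0:E2) + sA 0 • xA 0 = e2 1 0
        have hs : sA 0 = -1 := by simp [sA]
        have hx : xA 0 = e2 (-1) 0 := by simp [xA]
        rw [hs, hx, zero_add_smul_mm]; norm_num
      · left
        refine ⟨?_, by simp [sA]⟩
        show (0:ℝ) ≤ ⟪xA 0, wA 0⟫
        have hx : xA 0 = e2 (-1) 0 := by simp [xA]
        have hw : wA 0 = 0 := rfl
        rw [hx, hw, inner_m0]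
    | 1, ih =>
      show wA 2 = e2 1 0
      have h1 : wA 1 = e2 1 0 := by simpa using ih
      rw [wA, if_neg]
      · exact h1
      · rw [not_or]
        constructor
        · rintro ⟨-, hs⟩
          simp [sA] at hs
          norm_num at hs
        · rintro ⟨hn, -⟩
          apply hn
          show (0:ℝ) ≤ ⟪xA 1, wA 1⟫
          have hx : xA 1 = e2 0 (-1) := by simp [xA]
          rw [hx, h1, inner_mm]; norm_num
    | (m+2), ih =>
      rcases Nat.even_or_odd (m+2) with he | ho
      · have hwn : wA (m+2) = e2 1 0 := by
          rw [ih, if_neg (by omega), if_pos (Or.inr he)]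
        have hx : xA (m+2) = e2 0 (-1) := by simp [xA]
        have hs : sA (m+2) = -1 := by simp [sA, he]
        have hip : (0:ℝ) ≤ ⟪xA (m+2), wA (m+2)⟫ := by
          rw [hx, hwn, inner_mm]; norm_num
        rw [wA, if_pos (Or.inl ⟨hip, hs⟩), hwn, hx, hs]
        have hne : ¬ Even (m+2+1) := by
          rw [Nat.even_add_one]; exact not_not_intro he
        have hcond2 : ¬ (m+2+1 = 1 ∨ Even (m+2+1)) := by
          push_neg; exact ⟨by omega, hne⟩
        rw [if_neg (by omega), if_neg hcond2, add_smul_mm]; norm_num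
      · have hne : ¬ Even (m+2) := Nat.not_even_iff_odd.mpr ho
        have hwn : wA (m+2) = e2 1 1 := by
          rw [ih, if_neg (by omega), if_neg (by push_neg; exact ⟨by omega, hne⟩)]
        have hx : xA (m+2) = e2 0 (-1) := by simp [xA]
        have hs : sA (m+2) = 1 := by simp [sA, hne]
        have hip : ¬ ((0:ℝ) ≤ ⟪xA (m+2), wA (m+2)⟫) := by
          rw [hx, hwn, inner_mm]; norm_num
        rw [wA, if_pos (Or.inr ⟨hip, hs⟩), hwn, hx, hs]
        have he3 : Even (m+2+1) := by
          rw [Nat.even_add_one]; simpa using hne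
        rw [if_neg (by omega), if_pos (Or.inr he3), add_smul_mm]; norm_num

private lemma sqrt54_lt_two : Real.sqrt (5/4) < 2 := by
  rw [show (2:ℝ) = Real.sqrt 4 by rw [show (4:ℝ) = 2^2 by norm_num, Real.sqrt_sq]; norm_num]
  exact Real.sqrt_lt_sqrt (by norm_num) (by norm_num)

private lemma sqrt2_le_two : Real.sqrt 2 ≤ 2 := by
  nlinarith [Real.sq_sqrt (by norm_num : (0:ℝ) ≤ 2), Real.sqrt_nonneg 2]

-- best response property of the run
private lemma brA (t : ℕ) (y : E2) :
    ((if ⟪y, wA t⟫ ≥ 0 then (1 : ℝ) else 0) - ‖y - zA t‖ / (1 / 2)) ≤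
      ((if ⟪xA t, wA t⟫ ≥ 0 then (1 : ℝ) else 0) - ‖xA t - zA t‖ / (1 / 2)) := by
  have hind : (if ⟪y, wA t⟫ ≥ 0 then (1 : ℝ) else 0) ≤ 1 := by split <;> norm_num
  have hnn : (0:ℝ) ≤ ‖y - zA t‖ := norm_nonneg _
  match t with
  | 0 =>
    have hx : xA 0 = zA 0 := rfl
    have hp : ⟪zA 0, wA 0⟫ ≥ 0 := by
      show ⟪e2 (-1) 0, (0:E2)⟫ ≥ 0
      rw [inner_m0]
    have hd : (0:ℝ) ≤ ‖y - zA 0‖ / (1/2) := by positivity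
    rw [hx, sub_self, norm_zero, if_pos hp]
    have h0 : (0:ℝ)/(1/2) = 0 := by norm_num
    rw [h0]; linarith
  | 1 =>
    have hx : xA 1 = zA 1 := rfl
    have hp : ⟪zA 1, wA 1⟫ ≥ 0 := by
      have hz : zA 1 = e2 0 (-1) := rfl
      have hw : wA 1 = e2 1 0 := by rw [wA_eq]; norm_num
      rw [hz, hw, inner_mm]; norm_num
    have hd : (0:ℝ) ≤ ‖y - zA 1‖ / (1/2) := by positivity
    rw [hx, sub_self, norm_zero, if_pos hp]
    have h0 : (0:ℝ)/(1/2) = 0 := by norm_num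
    rw [h0]; linarith
  | (m+2) =>
    have hx : xA (m+2) = e2 0 (-1) := by simp [xA]
    rcases Nat.even_or_odd (m+2) with he | ho
    · -- w = (1,0), z = (-1/2,-1), x = (0,-1)
      have hw : wA (m+2) = e2 1 0 := by
        rw [wA_eq, if_neg (by omega), if_pos (Or.inr he)]
      have hz : zA (m+2) = e2 (-1/2) (-1) := by simp [zA, he]
      have hxz : ‖xA (m+2) - zA (m+2)‖ = 1/2 := by
        rw [hx, hz, sub_mm, norm_mm]
        rw [show (0 - -1/2:ℝ)^2 + (-1 - -1:ℝ)^2 = (1/2)^2 by ring]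
        rw [Real.sqrt_sq (by norm_num)]
      have hipx : ⟪xA (m+2), wA (m+2)⟫ ≥ 0 := by
        rw [hx, hw, inner_mm]; norm_num
      rw [hxz, if_pos hipx]
      by_cases hy : ⟪y, wA (m+2)⟫ ≥ 0
      · rw [if_pos hy]
        have hcs : (1/2:ℝ) ≤ ‖y - zA (m+2)‖ * ‖wA (m+2)‖ := by
          apply cs' _ _ _ _ _ hy
          rw [hz, hw, inner_mm]; norm_num
        have hnw : ‖wA (m+2)‖ = 1 := by
          rw [hw, norm_mm]
          rw [show (1:ℝ)^2 + 0^2 = 1 by ring, Real.sqrt_one]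
        rw [hnw, mul_one] at hcs
        linarith [hcs]
      · rw [if_neg hy]
        have : (0:ℝ) ≤ ‖y - zA (m+2)‖ / (1/2) := by positivity
        linarith
    · -- w = (1,1), z = x = (0,-1)
      have hne : ¬ Even (m+2) := Nat.not_even_iff_odd.mpr ho
      have hw : wA (m+2) = e2 1 1 := by
        rw [wA_eq, if_neg (by omega), if_neg (by push_neg; exact ⟨by omega, hne⟩)]
      have hz : zA (m+2) = e2 0 (-1) := by simp [zA, hne]
      have hxz : xA (m+2) = zA (m+2) := by rw [hx, hz]
      have hipx : ¬ (⟪xA (m+2), wA (m+2)⟫ ≥ 0) := by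
        rw [hx, hw, inner_mm]; norm_num
      rw [if_neg hipx, hxz, sub_self, norm_zero]
      by_cases hy : ⟪y, wA (m+2)⟫ ≥ 0
      · rw [if_pos hy]
        have hcs : (1:ℝ) ≤ ‖y - zA (m+2)‖ * ‖wA (m+2)‖ := by
          apply cs' _ _ _ _ _ hy
          rw [hz, hw, inner_mm]; norm_num
        have hnw : ‖wA (m+2)‖ = Real.sqrt 2 := by
          rw [hw, norm_mm]; norm_num
        rw [hnw] at hcs
        have h2 : (1:ℝ) ≤ 2 * ‖y - zA (m+2)‖ := by
          nlinarith [sqrt2_le_two, norm_nonneg (y - zA (m+2))]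
        have h0 : (0:ℝ)/(1/2) = 0 := by norm_num
        rw [h0]; linarith [h2]
      · rw [if_neg hy]
        have : (0:ℝ) ≤ ‖y - zA (m+2)‖ / (1/2) := by positivity
        linarith

private lemma mistakeA (t : ℕ) (ht : 2 ≤ t) :
    ((⟪xA t, wA t⟫ ≥ 0 ∧ sA t = -1) ∨ (¬(⟪xA t, wA t⟫ ≥ 0) ∧ sA t = 1)) := by
  have hx : xA t = e2 0 (-1) := by simp [xA]; omega
  rcases Nat.even_or_odd t with he | ho
  · left
    have hw : wA t = e2 1 0 := by
      rw [wA_eq, if_neg (by omega), if_pos (Or.inr he)]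
    refine ⟨?_, by simp [sA, he]⟩
    rw [hx, hw, inner_mm]; norm_num
  · right
    have hne : ¬ Even t := Nat.not_even_iff_odd.mpr ho
    have hw : wA t = e2 1 1 := by
      rw [wA_eq, if_neg (by omega), if_neg (by push_neg; exact ⟨by omega, hne⟩)]
    refine ⟨?_, by simp [sA, hne]⟩
    rw [hx, hw, inner_mm]; norm_num

end
end PerceptronAux

open scoped Classical in
theorem classic_perceptron_fails_under_strategic_manipulation :
    ∃ (s : ℕ → ℝ) (z x : ℕ → EuclideanSpace ℝ (Fin 2))
      (w : ℕ → EuclideanSpace ℝ (Fin 2)) (pos mistake : ℕ → Prop),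
      (∀ t, s t = 1 ∨ s t = -1) ∧
      s 0 = -1 ∧ z 0 = ![(-1 : ℝ), 0] ∧
      (∀ k : ℕ, s (2 * k + 1) = 1 ∧ z (2 * k + 1) = ![(0 : ℝ), -1]) ∧
      (∀ k : ℕ, s (2 * k + 2) = -1 ∧ z (2 * k + 2) = ![(-1 / 2 : ℝ), -1]) ∧
      -- (i) the true points are linearly separable with margin
      (∃ wsep : EuclideanSpace ℝ (Fin 2), ∀ t, s t * ⟪z t, wsep⟫ ≥ 1) ∧
      -- (ii) classic Perceptron run on best responses with budget α = 1/2
      w 0 = 0 ∧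
      (∀ t, pos t ↔ ⟪x t, w t⟫ ≥ 0) ∧
      (∀ t, mistake t ↔ ((pos t ∧ s t = -1) ∨ (¬ pos t ∧ s t = 1))) ∧
      (∀ t, w (t + 1) = if mistake t then w t + s t • x t else w t) ∧
      (∀ t, ∀ y : EuclideanSpace ℝ (Fin 2),
        ((if ⟪y, w t⟫ ≥ 0 then (1 : ℝ) else 0) - ‖y - z t‖ / (1 / 2)) ≤
          ((if ⟪x t, w t⟫ ≥ 0 then (1 : ℝ) else 0) - ‖x t - z t‖ / (1 / 2))) ∧
      -- (iii) infinitely many mistakes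
      {t | mistake t}.Infinite ∧
      -- (iv) a perfect classifier under manipulation exists
      (∃ wperf : EuclideanSpace ℝ (Fin 2), wperf = ![(1 : ℝ), 1 / 2] ∧
        ∀ t, ∀ xb : EuclideanSpace ℝ (Fin 2),
          (∀ y : EuclideanSpace ℝ (Fin 2),
            ((if ⟪y, wperf⟫ ≥ 0 then (1 : ℝ) else 0) - ‖y - z t‖ / (1 / 2)) ≤
              ((if ⟪xb, wperf⟫ ≥ 0 then (1 : ℝ) else 0) - ‖xb - z t‖ / (1 / 2))) →
          (⟪xb, wperf⟫ ≥ 0 ↔ s t = 1)) := by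
  refine ⟨sA, zA, xA, wA, (fun t => ⟪xA t, wA t⟫ ≥ 0),
    (fun t => ((⟪xA t, wA t⟫ ≥ 0 ∧ sA t = -1) ∨ (¬(⟪xA t, wA t⟫ ≥ 0) ∧ sA t = 1))),
    ?_, ?_, ?_, ?_, ?_, ?_, rfl, fun t => Iff.rfl, fun t => Iff.rfl, ?_, brA, ?_, ?_⟩
  · intro t
    by_cases h : Even t <;> simp [sA, h]
  · simp [sA]
  · rfl
  · intro k
    have ho : ¬ Even (2*k+1) := by simp [Nat.even_add_one]
    constructor
    · simp [sA, ho]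
    · show zA (2*k+1) = ![(0 : ℝ), -1]
      rw [zA]
      simp only [if_neg (by omega : ¬ (2*k+1 = 0)), if_neg ho]
      rfl
  · intro k
    have he : Even (2*k+2) := ⟨k+1, by ring⟩
    constructor
    · simp [sA, he]
    · show zA (2*k+2) = ![(-1/2 : ℝ), -1]
      rw [zA]
      simp only [if_neg (by omega : ¬ (2*k+2 = 0)), if_pos he]
      rfl
  · -- separability
    refine ⟨e2 4 (-1), fun t => ?_⟩
    match t with
    | 0 =>
      have hz : zA 0 = e2 (-1) 0 := rfl
      have hs : sA 0 = -1 := by simp [sA]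
      rw [hz, inner_mm, hs]; norm_num
    | (n+1) =>
      rcases Nat.even_or_odd (n+1) with he | ho
      · have hz : zA (n+1) = e2 (-1/2) (-1) := by simp [zA, he]
        have hs : sA (n+1) = -1 := by simp [sA, he]
        rw [hz, inner_mm, hs]; norm_num
      · have hne : ¬ Even (n+1) := Nat.not_even_iff_odd.mpr ho
        have hz : zA (n+1) = e2 0 (-1) := by simp [zA, hne]
        have hs : sA (n+1) = 1 := by simp [sA, hne]
        rw [hz, inner_mm, hs]; norm_num
  · -- update rule
    intro t
    rw [wA]
    by_cases h : ((⟪xA t, wA t⟫ ≥ 0 ∧ sA t = -1) ∨ (¬(⟪xA t, wA t⟫ ≥ 0) ∧ sA t = 1))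
    · simp only [if_pos h]
    · simp only [if_neg h]
  · -- infinitely many mistakes
    apply Set.Infinite.mono (fun t (ht : t ∈ Set.Ici 2) => mistakeA t ht)
    exact Set.Ici_infinite 2
  · -- perfect classifier
    refine ⟨e2 1 (1/2), rfl, fun t xb hbr => ?_⟩
    have hnw : ‖e2 1 (1/2)‖ = Real.sqrt (5/4) := by rw [norm_mm]; norm_num
    -- two kinds of z : inner = -1 (negative label) or z = (0,-1) (positive label)
    have hneg : ∀ (hz : ⟪zA t, e2 1 (1/2)⟫ = -1), ¬ (⟪xb, e2 1 (1/2)⟫ ≥ 0) := by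
      intro hz hpos
      have h0 := hbr (zA t)
      rw [sub_self, norm_zero, if_neg (by rw [hz]; norm_num), if_pos hpos] at h0
      have hcs : (1:ℝ) ≤ ‖xb - zA t‖ * Real.sqrt (5/4) := by
        rw [← hnw]; exact cs' _ _ _ _ hz hpos
      have hnn : (0:ℝ) ≤ ‖xb - zA t‖ := norm_nonneg _
      have hgt : (1/2:ℝ) < ‖xb - zA t‖ := by
        nlinarith [sqrt54_lt_two, Real.sqrt_nonneg (5/4:ℝ)]
      have hz0 : (0:ℝ)/(1/2) = 0 := by norm_num
      rw [hz0] at h0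
      linarith [h0]
    rcases Nat.eq_zero_or_pos t with ht0 | htp
    · subst ht0
      have hz : ⟪zA 0, e2 1 (1/2)⟫ = -1 := by
        have : zA 0 = e2 (-1) 0 := rfl
        rw [this, inner_mm]; norm_num
      have hs : sA 0 = -1 := by simp [sA]
      constructor
      · intro h; exact absurd h (hneg hz)
      · intro h; rw [hs] at h; norm_num at h
    · rcases Nat.even_or_odd t with he | ho
      · -- even t ≥ 2 : z = (-1/2,-1), label -1
        have hz : ⟪zA t, e2 1 (1/2)⟫ = -1 := by
          have : zA t = e2 (-1/2) (-1) := by simp [zA, he]; omega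
          rw [this, inner_mm]; norm_num
        have hs : sA t = -1 := by simp [sA, he]
        constructor
        · intro h; exact absurd h (hneg hz)
        · intro h; rw [hs] at h; norm_num at h
      · -- odd t : z = (0,-1), label 1
        have hne : ¬ Even t := Nat.not_even_iff_odd.mpr ho
        have hz : zA t = e2 0 (-1) := by simp [zA, hne]; omega
        have hs : sA t = 1 := by simp [sA, hne]
        rw [hs]
        refine ⟨fun _ => rfl, fun _ => ?_⟩
        by_contra hnegx
        have h0 := hbr (e2 (2/5) (-4/5))
        have hy0 : ⟪e2 (2/5) (-4/5), e2 1 (1/2)⟫ ≥ 0 := by rw [inner_mm]; norm_num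
        have hny : ‖e2 (2/5) (-4/5) - zA t‖ = Real.sqrt (1/5) := by
          rw [hz, sub_mm, norm_mm]; norm_num
        have hslt : Real.sqrt (1/5) < 1/2 := by
          rw [show (1/2:ℝ) = Real.sqrt (1/4) by
            rw [show (1/4:ℝ) = (1/2)^2 by norm_num, Real.sqrt_sq]; norm_num]
          exact Real.sqrt_lt_sqrt (by norm_num) (by norm_num)
        rw [if_pos hy0, if_neg hnegx, hny] at h0
        have hnn : (0:ℝ) ≤ ‖xb - zA t‖ := norm_nonneg _
        linarith [h0, hslt]
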